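/- With P = ℂ[x₁,x₂,x₃], f₁ = 2x₁+x₂x₃, f₂ = 2x₂+x₁x₃, f₃ = x₁x₂, and the Koszul maps d₁ : P³ → P, d₁(a₁,a₂,a₃) = a₁f₁ + a₂f₂ + a₃f₃, and d₂ : P³ → P³, d₂(b₁₂,b₁₃,b₂₃) = (−b₁₂f₂ − b₁₃f₃, b₁₂f₁ − b₂₃f₃, b₁₃f₁ + b₂₃f₂), set v := (2x₂, −x₂x₃, x₃²−4) ∈ P³. Then: (i) d₁(v) = 0; (ii) every element of ker d₁ can be written as p(x₃)·v + d₂(u) for some polynomial p ∈ ℂ[x₃] ⊆ P and some u ∈ P³; and (iii) if p(x₃)·v ∈ im d₂ for some p ∈ ℂ[x₃], then p = 0. (Thus the degree −1 Koszul cohomology of (∂W) for W = x₁²+x₂²+x₁x₂x₃ is the free ℂ[x₃]-module generated by 2x₂θ₁ − x₂x₃θ₂ + (x₃²−4)θ₃.) -/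

import Mathlib

noncomputable section
open MvPolynomial

/-- `P = ℂ[x₁,x₂,x₃]` with `x₁ = X 0`, `x₂ = X 1`, `x₃ = X 2`. -/
abbrev P : Type := MvPolynomial (Fin 3) ℂ

/-- `f₁ = 2x₁+x₂x₃ = ∂W/∂x₁` for `W = x₁²+x₂²+x₁x₂x₃`. -/
def f1 : P := 2 * X 0 + X 1 * X 2
/-- `f₂ = 2x₂+x₁x₃`. -/
def f2 : P := 2 * X 1 + X 0 * X 2
/-- `f₃ = x₁x₂`. -/
def f3 : P := X 0 * X 1

/-- Koszul differential `d₁ : P³ → P`. -/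
def d1 : P × P × P → P := fun a => a.1 * f1 + a.2.1 * f2 + a.2.2 * f3

/-- Koszul differential `d₂ : P³ → P³`, middle term indexed by `(1,2), (1,3), (2,3)`. -/
def d2 : P × P × P → P × P × P := fun b =>
  (-(b.1 * f2) - b.2.1 * f3, b.1 * f1 - b.2.2 * f3, b.2.1 * f1 + b.2.2 * f2)

/-- `v = (2x₂, −x₂x₃, x₃²−4)`. -/
def v : P × P × P := (2 * X 1, -(X 1 * X 2), X 2 ^ 2 - 4)

def half : P := C (2⁻¹ : ℂ)
lemma two_half : (2:P) * half = 1 := by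
  have h : ((2:ℂ) * 2⁻¹) = 1 := by norm_num
  rw [half, ← map_ofNat (C : ℂ →+* P) 2, ← C_mul, h, C_1]

lemma subst_dvd (u : Fin 3 → P) (i : Fin 3) (hu : ∀ j, j ≠ i → u j = X j) (g : P) :
    (X i - u i) ∣ (g - aeval u g) := by
  induction g using MvPolynomial.induction_on with
  | C c => simp
  | add p q hp hq =>
      rw [map_add]
      have h : p + q - (aeval u p + aeval u q) = (p - aeval u p) + (q - aeval u q) := by ring
      rw [h]; exact dvd_add hp hq
  | mul_X p j hp =>
      rw [map_mul, aeval_X]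
      rcases eq_or_ne j i with rfl | hj
      · have h : p * X j - aeval u p * u j
            = (p - aeval u p) * X j + aeval u p * (X j - u j) := by ring
        rw [h]
        exact dvd_add (hp.mul_right _) (dvd_mul_left _ _)
      · rw [hu j hj]
        have h : p * X j - aeval u p * X j = (p - aeval u p) * X j := by ring
        rw [h]; exact hp.mul_right _

def t1 : P →ₐ[ℂ] P := aeval ![-(half * (X 1 * X 2)), X 1, X 2]
def t2 : P →ₐ[ℂ] P := aeval ![X 0, -(half * (X 0 * X 2)), X 2]
def ψp : P →ₐ[ℂ] P := aeval ![X 0, X 1, C (2:ℂ)]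
def ψm : P →ₐ[ℂ] P := aeval ![X 0, X 1, C (-2:ℂ)]
def π0 : P →ₐ[ℂ] P := aeval ![0, X 1, X 2]
def π1 : P →ₐ[ℂ] P := aeval ![X 0, 0, X 2]
def πz : P →ₐ[ℂ] P := aeval ![0, 0, X 2]
def ee : P →ₐ[ℂ] Polynomial ℂ := aeval ![0, 0, Polynomial.X]

lemma t1_f1 : t1 f1 = 0 := by
  simp only [t1, f1, map_add, map_mul, map_ofNat, aeval_X, Matrix.cons_val_zero,
    Matrix.cons_val_one, Matrix.head_cons, Matrix.cons_val_two, Matrix.tail_cons]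
  linear_combination (-(X 1 * X 2 : P)) * two_half

lemma t1_f2 : t1 f2 = 2*X 1 - half * (X 1 * X 2^2) := by
  simp only [t1, f2, map_add, map_mul, map_ofNat, aeval_X, Matrix.cons_val_zero,
    Matrix.cons_val_one, Matrix.head_cons, Matrix.cons_val_two, Matrix.tail_cons]
  ring

lemma t1_f3 : t1 f3 = -(half * (X 1^2 * X 2)) := by
  simp only [t1, f3, map_mul, aeval_X, Matrix.cons_val_zero,
    Matrix.cons_val_one, Matrix.head_cons]
  ring

lemma t2_f1 : t2 f1 = 2*X 0 - half * (X 0 * X 2^2) := by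
  simp only [t2, f1, map_add, map_mul, map_ofNat, aeval_X, Matrix.cons_val_zero,
    Matrix.cons_val_one, Matrix.head_cons, Matrix.cons_val_two, Matrix.tail_cons]
  ring

lemma t2_f2 : t2 f2 = 0 := by
  simp only [t2, f2, map_add, map_mul, map_ofNat, aeval_X, Matrix.cons_val_zero,
    Matrix.cons_val_one, Matrix.head_cons, Matrix.cons_val_two, Matrix.tail_cons]
  linear_combination (-(X 0 * X 2 : P)) * two_half

lemma ee_f1 : ee f1 = 0 := by simp [ee, f1]
lemma ee_f2 : ee f2 = 0 := by simp [ee, f2]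

lemma t1_idem : t1.comp t1 = t1 := by
  apply MvPolynomial.algHom_ext
  intro i
  fin_cases i <;> simp [t1, half, MvPolynomial.algebraMap_eq]

lemma pi10 : π1.comp π0 = πz := by
  apply MvPolynomial.algHom_ext
  intro i
  fin_cases i <;> simp [π0, π1, πz]

lemma aeval_ee : (Polynomial.aeval (X 2 : P)).comp ee = πz := by
  apply MvPolynomial.algHom_ext
  intro i
  fin_cases i <;> simp [ee, πz]

lemma ee_aeval (p : Polynomial ℂ) : ee (Polynomial.aeval (X 2 : P) p) = p := by
  have h : ee.comp (Polynomial.aeval (X 2 : P)) = AlgHom.id ℂ (Polynomial ℂ) := by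
    apply Polynomial.algHom_ext
    simp [ee]
  calc ee (Polynomial.aeval (X 2 : P) p) = (ee.comp (Polynomial.aeval (X 2 : P))) p := rfl
    _ = p := by rw [h]; rfl

lemma X_ne (i : Fin 3) : (X i : P) ≠ 0 := MvPolynomial.X_ne_zero i

lemma four_sub_ne : (4:P) - X 2^2 ≠ 0 := by
  intro h
  have := congrArg (eval (fun _ => (0:ℂ))) h
  simp [map_ofNat] at this

lemma f2_ne : (f2 : P) ≠ 0 := by
  intro h
  have := congrArg (eval ![0,1,0]) h
  simp [f2] at this

lemma hC2 : (C (2:ℂ) : P) = 2 := map_ofNat (C : ℂ →+* P) 2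
lemma hCm2 : (C (-2:ℂ) : P) = -2 := by
  rw [show ((-2:ℂ)) = -(2:ℂ) by norm_num, map_neg, hC2]

-- division lemmas
lemma red_f2 (g : P) : ∃ c, g = t2 g + f2 * c := by
  have h0 := subst_dvd ![X 0, -(half * (X 0 * X 2)), X 2] 1
    (by intro j hj; fin_cases j <;> simp_all) g
  simp only [Matrix.cons_val_one, Matrix.head_cons] at h0
  have h : (X 1 - -(half * (X 0 * X 2))) ∣ (g - t2 g) := h0
  obtain ⟨c, hc⟩ := h
  refine ⟨half * c, ?_⟩
  simp only [f2]
  linear_combination hc - (X 1 * c) * two_half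

lemma red_f1 (g : P) : ∃ c, g = t1 g + f1 * c := by
  have h0 := subst_dvd ![-(half * (X 1 * X 2)), X 1, X 2] 0
    (by intro j hj; fin_cases j <;> simp_all) g
  simp only [Matrix.cons_val_zero] at h0
  have h : (X 0 - -(half * (X 1 * X 2))) ∣ (g - t1 g) := h0
  obtain ⟨c, hc⟩ := h
  refine ⟨half * c, ?_⟩
  simp only [f1]
  linear_combination hc - (X 0 * c) * two_half

lemma div_f2 (g : P) (h : t2 g = 0) : ∃ c, g = f2 * c := by
  obtain ⟨c, hc⟩ := red_f2 g
  exact ⟨c, by rw [hc, h, zero_add]⟩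

lemma div_Xp (g : P) (h : ψp g = 0) : ∃ c, g = (X 2 - 2) * c := by
  have h0 := subst_dvd ![X 0, X 1, C (2:ℂ)] 2
    (by intro j hj; fin_cases j <;> simp_all) g
  simp only [Matrix.cons_val_two, Matrix.tail_cons, Matrix.head_cons] at h0
  have h1 : (X 2 - C (2:ℂ)) ∣ (g - ψp g) := h0
  rw [h, sub_zero, hC2] at h1
  exact h1

lemma div_Xm (g : P) (h : ψm g = 0) : ∃ c, g = (X 2 + 2) * c := by
  have h0 := subst_dvd ![X 0, X 1, C (-2:ℂ)] 2
    (by intro j hj; fin_cases j <;> simp_all) g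
  simp only [Matrix.cons_val_two, Matrix.tail_cons, Matrix.head_cons] at h0
  have h1 : (X 2 - C (-2:ℂ)) ∣ (g - ψm g) := h0
  rw [h, sub_zero, hCm2, sub_neg_eq_add] at h1
  exact h1

lemma div_X0 (g : P) : ∃ c, g - π0 g = X 0 * c := by
  have h0 := subst_dvd ![0, X 1, X 2] 0
    (by intro j hj; fin_cases j <;> simp_all) g
  simp only [Matrix.cons_val_zero, sub_zero] at h0
  exact h0

lemma div_X1 (g : P) : ∃ c, g - π1 g = X 1 * c := by
  have h0 := subst_dvd ![X 0, 0, X 2] 1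
    (by intro j hj; fin_cases j <;> simp_all) g
  simp only [Matrix.cons_val_one, Matrix.head_cons, Matrix.cons_val_zero, sub_zero] at h0
  exact h0

/- STATEMENT 16: (i) `d₁(v) = 0`; (ii) every element of `ker d₁` is of the form
`p(x₃)·v + d₂(u)` with `p ∈ ℂ[x₃]` and `u ∈ P³`; (iii) if `p(x₃)·v ∈ im d₂` then `p = 0`.
(The degree `−1` Koszul cohomology of `∂W` is the free `ℂ[x₃]`-module on
`2x₂θ₁ − x₂x₃θ₂ + (x₃²−4)θ₃`.) -/
theorem stmt16 :
    d1 v = 0 ∧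
    (∀ w : P × P × P, d1 w = 0 →
      ∃ (p : Polynomial ℂ) (u : P × P × P),
        w = (Polynomial.aeval (X 2 : P) p) • v + d2 u) ∧
    (∀ p : Polynomial ℂ,
      (∃ u : P × P × P, (Polynomial.aeval (X 2 : P) p) • v = d2 u) → p = 0) := by
  refine ⟨?_, ?_, ?_⟩
  · -- (i)
    simp only [d1, v, f1, f2, f3]
    ring
  · -- (ii)
    rintro ⟨a1, a2, a3⟩ hw
    simp only [d1] at hw
    -- Step 1: reduce a3 modulo f2 and f1
    obtain ⟨h, ha3'⟩ := red_f2 a3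
    obtain ⟨k, ha3''⟩ := red_f1 (t2 a3)
    set r : P := t1 (t2 a3) with hrdef
    have ha3 : a3 = r + f1*k + f2*h := by rw [ha3', ha3'']
    have E' : (a1 + k*f3) * f1 + (a2 + h*f3) * f2 + r * f3 = 0 := by
      linear_combination hw - f3 * ha3
    have ht1r : t1 r = r := by
      rw [hrdef, ← AlgHom.comp_apply, t1_idem]
    -- star equation
    have hE1 := congrArg t1 E'
    rw [map_zero, map_add, map_add, map_mul, map_mul, map_mul, t1_f1, t1_f2, t1_f3, ht1r]
      at hE1
    have key : X 1 * (t1 (a2 + h*f3) * (4 - X 2^2) - r * (X 1 * X 2)) = 0 := by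
      linear_combination 2*hE1 + (t1 (a2 + h*f3) * (X 1*X 2^2) + r*(X 1^2*X 2)) * two_half
    have hstar : t1 (a2 + h*f3) * (4 - X 2^2) = r * (X 1 * X 2) := by
      rcases mul_eq_zero.mp key with h0 | h0
      · exact absurd h0 (X_ne 1)
      · exact sub_eq_zero.mp h0
    -- apply ψp
    have hp2 : ψp r = 0 := by
      have hp := congrArg ψp hstar
      simp only [map_mul, map_sub, map_pow, map_ofNat] at hp
      rw [show ψp (X 2) = (2:P) by simp [ψp, hC2],
          show ψp (X 1) = (X 1:P) by simp [ψp]] at hp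
      rw [show (4:P) - 2^2 = 0 by norm_num, mul_zero] at hp
      rcases mul_eq_zero.mp hp.symm with h0 | h0
      · exact h0
      · exact absurd h0 (mul_ne_zero (X_ne 1) (by norm_num))
    obtain ⟨r', hr'⟩ := div_Xp r hp2
    have hm2 : ψm r = 0 := by
      have hp := congrArg ψm hstar
      simp only [map_mul, map_sub, map_pow, map_ofNat] at hp
      rw [show ψm (X 2) = (-2:P) by simp [ψm, hCm2, hC2],
          show ψm (X 1) = (X 1:P) by simp [ψm]] at hp
      rw [show (4:P) - (-2)^2 = 0 by norm_num, mul_zero] at hp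
      rcases mul_eq_zero.mp hp.symm with h0 | h0
      · exact h0
      · exact absurd h0 (mul_ne_zero (X_ne 1) (by norm_num))
    have hm2' : ψm r' = 0 := by
      have hp := congrArg ψm hr'
      rw [hm2, map_mul, map_sub, map_ofNat] at hp
      rw [show ψm (X 2) = (-2:P) by simp [ψm, hCm2, hC2]] at hp
      rw [show ((-2:P) - 2) = -4 by norm_num] at hp
      have h4 : (-4:P) ≠ 0 := by norm_num
      rcases mul_eq_zero.mp hp.symm with h0 | h0
      · exact absurd h0 h4
      · exact h0
    obtain ⟨r2, hr2⟩ := div_Xm r' hm2'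
    have hrr : r = (X 2 - 2) * ((X 2 + 2) * r2) := by rw [hr', hr2]
    -- the pure (f1,f2) syzygy
    have hkos : X 1*X 2*f2 - 2*(X 1*f1) = X 0*X 1*(X 2^2 - 4) := by
      simp only [f1, f2]; ring
    have hf3 : f3 = X 0*X 1 := rfl
    have hc : (a1 + k*f3 - 2*(X 1*r2)) * f1 + (a2 + h*f3 + X 1*X 2*r2) * f2 = 0 := by
      linear_combination E' + r2*hkos - (X 0*X 1)*hrr - r*hf3
    have ht2c1 : t2 (a1 + k*f3 - 2*(X 1*r2)) = 0 := by
      have hq := congrArg t2 hc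
      rw [map_zero, map_add, map_mul, map_mul, t2_f2, mul_zero, add_zero] at hq
      rcases mul_eq_zero.mp hq with h0 | h0
      · exact h0
      · exfalso
        rw [t2_f1] at h0
        have h2 : X 0 * ((4:P) - X 2^2) = 0 := by
          linear_combination 2*h0 + (X 0*X 2^2)*two_half
        rcases mul_eq_zero.mp h2 with h|h
        · exact X_ne 0 h
        · exact four_sub_ne h
    obtain ⟨m, c1val⟩ := div_f2 _ ht2c1
    have hc2v : f2 * ((a2 + h*f3 + X 1*X 2*r2) + m*f1) = 0 := by
      linear_combination hc - f1*c1val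
    have hc2 : a2 + h*f3 + X 1*X 2*r2 = -(m*f1) := by
      rcases mul_eq_zero.mp hc2v with h0 | h0
      · exact absurd h0 f2_ne
      · linear_combination h0
    -- split r2
    obtain ⟨g0, hg0⟩ := div_X0 r2
    obtain ⟨g1, hg1⟩ := div_X1 (π0 r2)
    have hπ : π1 (π0 r2) = πz r2 := by rw [← AlgHom.comp_apply, pi10]
    rw [hπ] at hg1
    have hsplit : r2 = πz r2 + X 0*g0 + X 1*g1 := by linear_combination hg0 + hg1
    -- assemble
    refine ⟨ee r2, (-m - X 1*g1, k - 2*g0 + X 2*g1, h + X 2*g0 - 2*g1), ?_⟩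
    have hq2 : Polynomial.aeval (X 2 : P) (ee r2) = πz r2 := by
      rw [← AlgHom.comp_apply, aeval_ee]
    rw [hq2]
    simp only [f1, f2, f3] at ha3 c1val hc2 hrr hsplit
    simp only [v, d2, f1, f2, f3, Prod.smul_mk, smul_eq_mul, Prod.mk_add_mk, Prod.mk.injEq]
    refine ⟨?_, ?_, ?_⟩
    · linear_combination c1val + 2*X 1*hsplit
    · linear_combination hc2 - X 1*X 2*hsplit
    · linear_combination ha3 + hrr + (X 2^2 - 4)*hsplit
  · -- (iii)
    rintro p ⟨u, hu⟩
    have h3 := congrArg (fun t : P × P × P => ee t.2.2) hu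
    simp only [v, d2, Prod.smul_mk, smul_eq_mul] at h3
    rw [map_mul, map_add, map_mul, map_mul, ee_f1, ee_f2, mul_zero, mul_zero, add_zero,
        ee_aeval] at h3
    have hX : ee (X 2^2 - 4) = Polynomial.X^2 - 4 := by simp [ee]
    rw [hX] at h3
    rcases mul_eq_zero.mp h3 with h0 | h0
    · exact h0
    · exfalso
      have := congrArg (Polynomial.eval 0) h0
      simp at this
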